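/- Let m < n be positive integers and F ∈ ℂ[x,y] with N⁰(F) ⊆ T_{m,n}. Then the following are equivalent: (a) for all 0 ≤ i ≤ n, the total-degree homogeneous component F^{(1,1)}_{m+n−i} is divisible by (x+y)^{n−i}; (b) the polynomial F_{xw}(x,w) := F(x, w−x) has support contained in the rectangle [0,m] × [0,n]. -/

import Mathlib

open MvPolynomial

noncomputable section

abbrev R2 : Type := MvPolynomial (Fin 2) ℂ

/-- The (0,1)-homogeneous component of `f` of degree `j` (terms with y-exponent `j`). -/
def comp01 (f : R2) (j : ℕ) : R2 :=
  ∑ d ∈ f.support.filter (fun d => d 1 = j), MvPolynomial.monomial d (f.coeff d)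

/-- The total-degree (i.e. (1,1)-)homogeneous component of `f` of degree `j`. -/
def comp11 (f : R2) (j : ℕ) : R2 :=
  ∑ d ∈ f.support.filter (fun d => d 0 + d 1 = j), MvPolynomial.monomial d (f.coeff d)

/-- The exponent vector of a monomial, as a point of `ℝ²`. -/
def toR2pt (d : Fin 2 →₀ ℕ) : ℝ × ℝ := ((d 0 : ℝ), (d 1 : ℝ))

/-- The support of `f`, as a subset of `ℝ²`. -/
def suppSet (f : R2) : Set (ℝ × ℝ) := toR2pt '' (f.support : Set (Fin 2 →₀ ℕ))

/-- The augmented Newton polygon `N⁰(f)`: convex hull of the support together with the origin. -/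
def newton0 (f : R2) : Set (ℝ × ℝ) := convexHull ℝ (insert (0, 0) (suppSet f))

/-- The trapezoid `T_{m,n}` with vertices `(0,0), (m+n,0), (m,n), (0,n)`. -/
def Tset (m n : ℝ) : Set (ℝ × ℝ) := {p | 0 ≤ p.2 ∧ p.2 ≤ n ∧ 0 ≤ p.1 ∧ p.1 ≤ m + n - p.2}

/-- The region `𝒩'' = T_{m/a, n/a} + ((a-1)/a)·(m,n)`. -/
def NsetPP (m n a : ℕ) : Set (ℝ × ℝ) :=
  (fun p : ℝ × ℝ => (p.1 + ((a : ℝ) - 1) * m / a, p.2 + ((a : ℝ) - 1) * n / a)) ''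
    Tset ((m : ℝ) / a) ((n : ℝ) / a)

/-- The Jacobian determinant `[f,g] = f_x g_y - f_y g_x`. -/
def jacDet (f g : R2) : R2 :=
  pderiv 0 f * pderiv 1 g - pderiv 1 f * pderiv 0 g

namespace Stmt10Aux

def sg : R2 →ₐ[ℂ] R2 := aeval ![X 0, X 1 - X 0]
def tu : R2 →ₐ[ℂ] R2 := aeval ![X 0, X 0 + X 1]

lemma deg2 (d : Fin 2 →₀ ℕ) : d.degree = d 0 + d 1 := by
  rw [Finsupp.degree, ← Fin.sum_univ_two (fun i => d i)]
  exact Finset.sum_subset (Finset.subset_univ _)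
    (fun i _ hi => Finsupp.notMem_support_iff.mp hi)

lemma comp11_eq (f : R2) (t : ℕ) : comp11 f t = homogeneousComponent t f := by
  rw [homogeneousComponent_apply, comp11]
  refine Finset.sum_congr ?_ (fun _ _ => rfl)
  ext d
  simp [deg2]

lemma tau_sigma (p : R2) : tu (sg p) = p := by
  have h : tu.comp sg = AlgHom.id ℂ R2 := by
    apply MvPolynomial.algHom_ext
    intro i
    fin_cases i <;> simp [sg, tu]
  calc tu (sg p) = (tu.comp sg) p := rfl
    _ = p := by rw [h]; rfl

lemma sg_X01 : sg (X 0 + X 1) = X 1 := by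
  simp [sg]

lemma tu_X1 : tu (X 1) = X 0 + X 1 := by
  simp [tu]

lemma dvd_transfer (s : ℕ) (p : R2) :
    (X 0 + X 1 : R2) ^ s ∣ p ↔ (X 1 : R2) ^ s ∣ sg p := by
  constructor
  · rintro ⟨q, rfl⟩
    exact ⟨sg q, by rw [map_mul, map_pow, sg_X01]⟩
  · rintro ⟨q, hq⟩
    refine ⟨tu q, ?_⟩
    have h2 := congrArg tu hq
    rw [tau_sigma] at h2
    rw [h2, map_mul, map_pow, tu_X1]

lemma X1_pow_dvd_iff (s : ℕ) (p : R2) :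
    (X 1 : R2) ^ s ∣ p ↔ ∀ d ∈ p.support, s ≤ d 1 := by
  classical
  constructor
  · rintro ⟨q, rfl⟩ d hd
    have h := support_mul _ _ hd
    obtain ⟨a, ha, b, hb, rfl⟩ := Finset.mem_add.mp h
    rw [support_X_pow] at ha
    simp only [Finset.mem_singleton] at ha
    subst ha
    simp
  · intro h
    refine ⟨∑ d ∈ p.support, monomial (d - Finsupp.single 1 s) (coeff d p), ?_⟩
    rw [Finset.mul_sum]
    conv_lhs => rw [as_sum p]
    refine Finset.sum_congr rfl (fun d hd => ?_)
    have hs := h d hd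
    have hfe : Finsupp.single 1 s + (d - Finsupp.single 1 s) = d := by
      ext i
      rcases eq_or_ne i 1 with rfl | hi
      · simp only [Finsupp.add_apply, Finsupp.tsub_apply, Finsupp.single_eq_same]
        omega
      · simp [Finsupp.single_eq_of_ne' (Ne.symm hi)]
    rw [X_pow_eq_monomial, monomial_mul, one_mul, hfe]

lemma sigma_hom {p : R2} {t : ℕ} (hp : p.IsHomogeneous t) : (sg p).IsHomogeneous t := by
  have h := MvPolynomial.IsHomogeneous.aeval (S := ℂ) (n := 1) hp (![X 0, X 1 - X 0] : Fin 2 → R2) ?_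
  · simpa [sg, one_mul] using h
  · intro i
    fin_cases i
    · simpa using isHomogeneous_X ℂ (0 : Fin 2)
    · simpa using (isHomogeneous_X ℂ (1 : Fin 2)).sub (isHomogeneous_X ℂ 0)

lemma coeff_sigma (p : R2) (d : Fin 2 →₀ ℕ) :
    coeff d (sg p) = coeff d (sg (homogeneousComponent (d 0 + d 1) p)) := by
  classical
  conv_lhs => rw [← sum_homogeneousComponent p]
  rw [map_sum, coeff_sum]
  refine Finset.sum_eq_single (d 0 + d 1) (fun i _ hne => ?_) (fun hnot => ?_)
  · refine (sigma_hom (homogeneousComponent_isHomogeneous (n := i) (φ := p))).coeff_eq_zero ?_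
    rw [deg2]; exact fun h => hne h.symm
  · rw [homogeneousComponent_eq_zero, map_zero, coeff_zero]
    rw [Finset.mem_range] at hnot
    omega

lemma supp_sub_pow (b : ℕ) : ∀ d ∈ ((X 1 - X 0 : R2) ^ b).support, d 1 ≤ b := by
  classical
  induction b with
  | zero =>
    intro d hd
    rw [pow_zero] at hd
    rw [mem_support_iff, coeff_one] at hd
    by_cases h0 : d = 0
    · subst h0; simp
    · simp [Ne.symm h0] at hd
  | succ k ih =>
    intro d hd
    rw [pow_succ] at hd
    obtain ⟨a, ha, b', hb, rfl⟩ := Finset.mem_add.mp (support_mul _ _ hd)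
    have h1 : b' 1 ≤ 1 := by
      have hsub := support_sub (Fin 2) (X 1 : R2) (X 0)
      have hb2 := hsub hb
      rw [support_X, support_X, Finset.mem_union] at hb2
      rcases hb2 with h | h <;> simp only [Finset.mem_singleton] at h <;> subst h <;> simp
    have := ih a ha
    simp only [Finsupp.add_apply]
    omega

lemma supp_sg_monomial (e : Fin 2 →₀ ℕ) (c : ℂ) :
    ∀ d ∈ (sg (monomial e c)).support, d 1 ≤ e 1 := by
  classical
  intro d hd
  have hm : (monomial e c : R2) = C c * (X 0 ^ e 0 * X 1 ^ e 1) := by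
    rw [monomial_eq]
    congr 1
    rw [Finsupp.prod_fintype _ _ (fun i => pow_zero _), Fin.prod_univ_two]
  rw [hm, map_mul, map_mul, map_pow, map_pow] at hd
  have hX0 : sg (X 0) = X 0 := by simp [sg]
  have hX1 : sg (X 1) = X 1 - X 0 := by simp [sg]
  rw [hX0, hX1] at hd
  obtain ⟨a, ha, b', hb, rfl⟩ := Finset.mem_add.mp (support_mul _ _ hd)
  obtain ⟨a2, ha2, b2, hb2, rfl⟩ := Finset.mem_add.mp (support_mul _ _ hb)
  have h0 : a 1 = 0 := by
    rw [show sg (C c) = C c from by simp [sg], mem_support_iff, coeff_C] at ha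
    by_cases h0 : a = 0
    · subst h0; simp
    · simp [Ne.symm (h0 : a ≠ 0)] at ha
  have h2 : a2 1 = 0 := by
    by_cases he : e 0 = 0
    · rw [he, pow_zero, mem_support_iff, coeff_one] at ha2
      by_cases h0 : a2 = 0
      · subst h0; simp
      · simp [Ne.symm h0] at ha2
    · rw [support_X_pow] at ha2
      simp only [Finset.mem_singleton] at ha2; subst ha2
      simp [Finsupp.single_apply]
  have h3 := supp_sub_pow (e 1) b2 hb2
  simp only [Finsupp.add_apply]
  omega

lemma supp_sg_bound (p : R2) (n : ℕ) (hp : ∀ e ∈ p.support, e 1 ≤ n) :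
    ∀ d ∈ (sg p).support, d 1 ≤ n := by
  classical
  intro d hd
  conv at hd => rw [as_sum p]
  rw [map_sum] at hd
  obtain ⟨e, he, hd2⟩ := Finset.mem_biUnion.mp (support_sum hd)
  exact le_trans (supp_sg_monomial e _ d hd2) (hp e he)

end Stmt10Aux

theorem stmt10 (m n : ℕ) (hm : 0 < m) (hmn : m < n) (F : R2)
    (hsupp : ∀ d ∈ F.support, d 1 ≤ n ∧ d 0 + d 1 ≤ m + n) :
    (∀ i ≤ n, (X 0 + X 1 : R2) ^ (n - i) ∣ comp11 F (m + n - i)) ↔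
      (∀ d ∈ (MvPolynomial.aeval (![X 0, X 1 - X 0] : Fin 2 → R2) F).support,
        d 0 ≤ m ∧ d 1 ≤ n) := by
  classical
  constructor
  · intro ha d hd
    have hd' : d ∈ (Stmt10Aux.sg F).support := hd
    refine ⟨?_, Stmt10Aux.supp_sg_bound F n (fun e he => (hsupp e he).1) d hd'⟩
    by_cases hmt : d 0 + d 1 ≤ m
    · omega
    · have hdvd : (X 0 + X 1 : R2) ^ (d 0 + d 1 - m) ∣ comp11 F (d 0 + d 1) := by
        by_cases htn : d 0 + d 1 ≤ m + n
        · have h3 := ha (m + n - (d 0 + d 1)) (by omega)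
          have e1 : n - (m + n - (d 0 + d 1)) = d 0 + d 1 - m := by omega
          have e2 : m + n - (m + n - (d 0 + d 1)) = d 0 + d 1 := by omega
          rwa [e1, e2] at h3
        · have hz : comp11 F (d 0 + d 1) = 0 := by
            rw [comp11]
            refine Finset.sum_eq_zero (fun e he => ?_)
            rw [Finset.mem_filter] at he
            have := (hsupp e he.1).2
            omega
          rw [hz]; exact dvd_zero _
      rw [Stmt10Aux.dvd_transfer, Stmt10Aux.comp11_eq, Stmt10Aux.X1_pow_dvd_iff] at hdvd
      have h1 := hdvd d ?_
      · omega
      · rw [mem_support_iff] at hd' ⊢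
        rw [← Stmt10Aux.coeff_sigma]
        exact hd'
  · intro hb i hi
    have e1 : n - i = (m + n - i) - m := by omega
    rw [e1, Stmt10Aux.dvd_transfer, Stmt10Aux.comp11_eq, Stmt10Aux.X1_pow_dvd_iff]
    intro d hd
    have hh := Stmt10Aux.sigma_hom
      (homogeneousComponent_isHomogeneous (n := m + n - i) (φ := F))
    have hdeg : d 0 + d 1 = m + n - i := by
      by_contra hne
      exact (mem_support_iff.mp hd)
        (hh.coeff_eq_zero (by rw [Stmt10Aux.deg2]; exact hne))
    have hds : d ∈ (Stmt10Aux.sg F).support := by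
      rw [mem_support_iff, Stmt10Aux.coeff_sigma F d, hdeg]
      exact mem_support_iff.mp hd
    have h2 := (hb d hds).1
    omega
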